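/- Let A be an m×n real Toeplitz matrix (m ≥ n ≥ 2) with entries A(i,j) = a(j−i). Write A₋₁ for the common (m−1)×(n−1) Toeplitz submatrix (deleting first row and column), y = (a(1),…,a(n−1))ᵀ, z = (a(−1),…,a(1−m))ᵀ, and z̄ = (a(1−m),…,a(n−m−1))ᵀ. Then the trailing (n−1)×(n−1) principal submatrix of AᵀA equals A₋₁ᵀA₋₁ + yyᵀ, and the leading (n−1)×(n−1) principal submatrix of AᵀA equals A₋₁ᵀA₋₁ + z̄ z̄ᵀ. -/

import Mathlib

open Matrix

/-- Let `A` be an `(m+1) × (n+1)` real Toeplitz matrix, `A i j = a (j − i)`,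
with `m + 1 ≥ n + 1 ≥ 2`. With `A₋₁` the `m × n` submatrix deleting the first
row and column, `y = (a 1, …, a n)ᵀ` and `z̄ = (a (−m), …, a (n − m − 1))ᵀ`:
the trailing `n × n` principal submatrix of `AᵀA` is `A₋₁ᵀA₋₁ + y yᵀ` and the
leading `n × n` principal submatrix of `AᵀA` is `A₋₁ᵀA₋₁ + z̄ z̄ᵀ`. -/
theorem stmt7 (m n : ℕ) (hn : 1 ≤ n) (hmn : n ≤ m)
    (A : Matrix (Fin (m + 1)) (Fin (n + 1)) ℝ) (a : ℤ → ℝ)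
    (hA : ∀ (i : Fin (m + 1)) (j : Fin (n + 1)), A i j = a ((j : ℤ) - (i : ℤ))) :
    (Aᵀ * A).submatrix Fin.succ Fin.succ =
        (A.submatrix Fin.succ Fin.succ)ᵀ * A.submatrix Fin.succ Fin.succ +
          Matrix.vecMulVec (fun t : Fin n => a ((t : ℤ) + 1))
            (fun t : Fin n => a ((t : ℤ) + 1)) ∧
      (Aᵀ * A).submatrix Fin.castSucc Fin.castSucc =
        (A.submatrix Fin.succ Fin.succ)ᵀ * A.submatrix Fin.succ Fin.succ +
          Matrix.vecMulVec (fun t : Fin n => a ((t : ℤ) - (m : ℤ)))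
            (fun t : Fin n => a ((t : ℤ) - (m : ℤ))) := by
  constructor
  · ext i j
    simp only [submatrix_apply, mul_apply, transpose_apply, Matrix.add_apply,
      vecMulVec_apply, hA, Fin.sum_univ_succ, Fin.val_succ, Fin.val_zero]
    push_cast
    simp only [show ∀ (p q : ℤ), p + 1 - (q + 1) = p - q from fun p q => by ring,
      show ∀ (p q : ℤ), 1 + p - (q + 1) = p - q from fun p q => by ring,
      show ∀ (p : ℤ), p + 1 - 0 = 1 + p from fun p => by ring,
      show ∀ (p : ℤ), p + 1 = 1 + p from fun p => by ring,
      show ∀ (p q : ℤ), 1 + p - (1 + q) = p - q from fun p q => by ring, sub_zero]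
    ring
  · ext i j
    simp only [submatrix_apply, mul_apply, transpose_apply, Matrix.add_apply,
      vecMulVec_apply, hA, Fin.sum_univ_castSucc, Fin.val_succ,
      Fin.coe_castSucc, Fin.val_last]
    push_cast
    simp only [show ∀ (p q : ℤ), p + 1 - (q + 1) = p - q from fun p q => by ring,
      show ∀ (p q : ℤ), 1 + p - (q + 1) = p - q from fun p q => by ring,
      show ∀ (p : ℤ), p + 1 - 0 = 1 + p from fun p => by ring,
      show ∀ (p : ℤ), p + 1 = 1 + p from fun p => by ring,
      show ∀ (p q : ℤ), 1 + p - (1 + q) = p - q from fun p q => by ring, sub_zero]
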